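/- Let 0 < l < L. Then for every s > 0 and every x ∈ ℝ, (e^{sΔ}f₀)(x) ≥ f₀(x) − 2s/l². -/

import Mathlib

open Set MeasureTheory

/-- The heat semigroup on ℝ:
`(e^{sΔ}g)(x) = (4πs)^{−1/2} ∫ e^{−y²/(4s)} g(x−y) dy` for `s > 0`
(extended by the identity for `s ≤ 0`). -/
noncomputable def heatSG (s : ℝ) (g : ℝ → ℝ) (x : ℝ) : ℝ :=
  if s ≤ 0 then g x
  else (4 * Real.pi * s) ^ (-(1 : ℝ) / 2) * ∫ y : ℝ, Real.exp (-(y ^ 2) / (4 * s)) * g (x - y)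

/-- The smoothed step function `h` with transition width `2l`. -/
noncomputable def hFun (l : ℝ) (x : ℝ) : ℝ :=
  if x < -l then 0
  else if x ≤ 0 then (1 / 2) * ((x + l) / l) ^ 2
  else if x ≤ l then 1 - (1 / 2) * ((l - x) / l) ^ 2
  else 1

/-- The smoothed indicator `f₀` of `[−L,L]` with transition regions of width `2l`:
`f₀ = 1` on `[−L+l, L−l]`, `f₀(x) = h(x+L)` on `[−L−l, −L+l]`,
`f₀(x) = h(L−x)` on `[L−l, L+l]`, and `f₀ = 0` for `|x| ≥ L+l`. -/
noncomputable def f0 (l L : ℝ) (x : ℝ) : ℝ :=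
  if x < -(L + l) then 0
  else if x < -L + l then hFun l (x + L)
  else if x ≤ L - l then 1
  else if x ≤ L + l then hFun l (L - x)
  else 0

/-- The (sub)derivative of `hFun`. -/
noncomputable def dFun (l : ℝ) (t : ℝ) : ℝ :=
  if t < -l then 0
  else if t ≤ 0 then (t + l) / l ^ 2
  else if t ≤ l then (l - t) / l ^ 2
  else 0

section values
variable {l x : ℝ}

lemma hFun_le (hl : 0 < l) (hx : x ≤ -l) : hFun l x = 0 := by
  unfold hFun
  have hx0 : x + l ≤ 0 := by linarith
  split_ifs with h1 h2 h3 <;>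
    first
      | rfl
      | (have : x + l = 0 := le_antisymm hx0 (by linarith); rw [this]; norm_num)
      | linarith

lemma hFun_ge (hl : 0 < l) (hx : l ≤ x) : hFun l x = 1 := by
  unfold hFun
  split_ifs with h1 h2 h3
  · linarith
  · linarith
  · have hx' : l - x = 0 := by linarith [le_antisymm h3 hx]
    rw [hx']; norm_num
  · rfl

lemma hFun_mid1 (hl : 0 < l) (h1 : -l ≤ x) (h2 : x ≤ 0) :
    hFun l x = (x + l) ^ 2 / (2 * l ^ 2) := by
  unfold hFun
  split_ifs <;>
    first
      | (rw [div_pow]; ring)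
      | linarith

lemma hFun_mid2 (hl : 0 < l) (h1 : 0 ≤ x) (h2 : x ≤ l) :
    hFun l x = 1 - (l - x) ^ 2 / (2 * l ^ 2) := by
  have hl' : l ≠ 0 := ne_of_gt hl
  unfold hFun
  split_ifs with g1 g2
  · linarith
  · have hx' : x = 0 := le_antisymm g2 h1
    rw [hx']
    rw [show (0:ℝ) + l = l by ring, div_self hl']
    field_simp
    ring
  · rw [div_pow]; ring

lemma dFun_le (hl : 0 < l) (hx : x ≤ -l) : dFun l x = 0 := by
  unfold dFun
  split_ifs with h1 h2 h3
  · rfl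
  · have hx' : x + l = 0 := by linarith [not_lt.mp h1]
    rw [hx', zero_div]
  · linarith [not_lt.mp h1]
  · rfl

lemma dFun_ge (hl : 0 < l) (hx : l ≤ x) : dFun l x = 0 := by
  unfold dFun
  split_ifs with h1 h2 h3
  · linarith
  · linarith
  · have hx' : l - x = 0 := by linarith [le_antisymm h3 hx]
    rw [hx', zero_div]
  · rfl

lemma dFun_mid1 (hl : 0 < l) (h1 : -l ≤ x) (h2 : x ≤ 0) :
    dFun l x = (x + l) / l ^ 2 := by
  unfold dFun
  split_ifs <;> first | rfl | linarith

lemma dFun_mid2 (hl : 0 < l) (h1 : 0 ≤ x) (h2 : x ≤ l) :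
    dFun l x = (l - x) / l ^ 2 := by
  unfold dFun
  split_ifs with g1 g2 <;>
    first
      | rfl
      | (have : x = 0 := le_antisymm g2 h1; rw [this]; ring)
      | linarith

lemma hFun_nonneg (hl : 0 < l) : 0 ≤ hFun l x := by
  unfold hFun
  split_ifs with h1 h2 h3
  · norm_num
  · positivity
  · have : ((l - x) / l) ^ 2 ≤ 1 := by
      rw [div_pow, div_le_one (by positivity)]
      nlinarith
    linarith
  · norm_num

lemma hFun_le_one (hl : 0 < l) : hFun l x ≤ 1 := by
  unfold hFun
  split_ifs with h1 h2 h3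
  · norm_num
  · have : ((x + l) / l) ^ 2 ≤ 1 := by
      rw [div_pow, div_le_one (by positivity)]
      nlinarith
    linarith
  · nlinarith [sq_nonneg ((l - x) / l)]
  · norm_num

/-- Reduction lemma: to prove `X ≤ Y` it suffices to show `Y - X = N / (2 l²)` with `0 ≤ N`. -/
lemma reduce {l X Y N : ℝ} (hl : 0 < l) (hN : 0 ≤ N) (e : Y - X = N / (2 * l ^ 2)) : X ≤ Y := by
  have : 0 ≤ N / (2 * l ^ 2) := div_nonneg hN (by positivity)
  linarith [e ▸ this]

/-- Semiconvexity-type tangent bound for `hFun`. -/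
lemma hkey (l : ℝ) (hl : 0 < l) (t u : ℝ) :
    hFun l t + dFun l t * (u - t) - (u - t) ^ 2 / (2 * l ^ 2) ≤ hFun l u := by
  have hl' : l ≠ 0 := ne_of_gt hl
  rcases le_or_gt t (-l) with ht | ht
  · rw [hFun_le hl ht, dFun_le hl ht]
    rcases le_or_gt u (-l) with hu | hu
    · rw [hFun_le hl hu]
      exact reduce hl (N := (u - t) ^ 2) (sq_nonneg _) (by field_simp; ring)
    rcases le_or_gt u 0 with hu2 | hu2
    · rw [hFun_mid1 hl hu.le hu2]
      exact reduce hl (N := (u + l) ^ 2 + (u - t) ^ 2)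
        (by positivity) (by field_simp <;> ring)
    rcases le_or_gt u l with hu3 | hu3
    · rw [hFun_mid2 hl hu2.le hu3]
      exact reduce hl (N := 2 * l ^ 2 - (l - u) ^ 2 + (u - t) ^ 2)
        (by nlinarith [mul_nonneg (by linarith : (0:ℝ) ≤ 2 * u - t - l) (by linarith : (0:ℝ) ≤ l - t)])
        (by field_simp <;> ring)
    · rw [hFun_ge hl hu3.le]
      exact reduce hl (N := 2 * l ^ 2 + (u - t) ^ 2) (by positivity) (by field_simp <;> ring)
  rcases le_or_gt t 0 with ht2 | ht2
  · rw [hFun_mid1 hl ht.le ht2, dFun_mid1 hl ht.le ht2]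
    rcases le_or_gt u (-l) with hu | hu
    · rw [hFun_le hl hu]
      exact reduce hl (N := 2 * (t + l) ^ 2 + 4 * (t + l) * (-(u + l)) + (u + l) ^ 2)
        (by nlinarith [mul_nonneg (by linarith : (0:ℝ) ≤ t + l) (by linarith : (0:ℝ) ≤ -(u + l))])
        (by field_simp <;> ring)
    rcases le_or_gt u 0 with hu2 | hu2
    · rw [hFun_mid1 hl hu.le hu2]
      exact reduce hl (N := 2 * (u - t) ^ 2) (by positivity) (by field_simp <;> ring)
    rcases le_or_gt u l with hu3 | hu3
    · rw [hFun_mid2 hl hu2.le hu3]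
      exact reduce hl (N := 2 * t * (t - 2 * u))
        (by nlinarith [mul_nonneg (by linarith : (0:ℝ) ≤ -t) (by linarith : (0:ℝ) ≤ 2 * u - t)])
        (by field_simp <;> ring)
    · rw [hFun_ge hl hu3.le]
      exact reduce hl
        (N := 4 * l * (-t) + 2 * t ^ 2 + 4 * (-t) * (u - l) + (u - l) ^ 2)
        (by nlinarith [mul_nonneg (by linarith : (0:ℝ) ≤ -t) (by linarith : (0:ℝ) ≤ u - l),
              mul_nonneg hl.le (by linarith : (0:ℝ) ≤ -t)])
        (by field_simp <;> ring)
  rcases le_or_gt t l with ht3 | ht3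
  · rw [hFun_mid2 hl ht2.le ht3, dFun_mid2 hl ht2.le ht3]
    rcases le_or_gt u (-l) with hu | hu
    · rw [hFun_le hl hu]
      exact reduce hl (N := -2 * l ^ 2 + (l - t) ^ 2 - 2 * (l - t) * (u - t) + (u - t) ^ 2)
        (by nlinarith [mul_nonneg (by linarith : (0:ℝ) ≤ -u - l) (by linarith : (0:ℝ) ≤ 2 * t + l - u),
              mul_nonneg (by linarith : (0:ℝ) ≤ l - t) (by linarith : (0:ℝ) ≤ -u - l)])
        (by field_simp <;> ring)
    rcases le_or_gt u 0 with hu2 | hu2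
    · rw [hFun_mid1 hl hu.le hu2]
      exact reduce hl (N := 2 * u ^ 2) (by positivity) (by field_simp <;> ring)
    rcases le_or_gt u l with hu3 | hu3
    · rw [hFun_mid2 hl hu2.le hu3]
      exact reduce hl (N := 0) le_rfl (by field_simp <;> ring)
    · rw [hFun_ge hl hu3.le]
      exact reduce hl (N := (l - u) ^ 2) (sq_nonneg _) (by field_simp <;> ring)
  · rw [hFun_ge hl ht3.le, dFun_ge hl ht3.le]
    rcases le_or_gt u (-l) with hu | hu
    · rw [hFun_le hl hu]
      exact reduce hl (N := -2 * l ^ 2 + (u - t) ^ 2)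
        (by nlinarith [mul_nonneg (by linarith : (0:ℝ) ≤ t - u - 2 * l) (by linarith : (0:ℝ) ≤ t - u + 2 * l)])
        (by field_simp <;> ring)
    rcases le_or_gt u 0 with hu2 | hu2
    · rw [hFun_mid1 hl hu.le hu2]
      exact reduce hl (N := (u + l) ^ 2 - 2 * l ^ 2 + (u - t) ^ 2)
        (by nlinarith [mul_nonneg (by linarith : (0:ℝ) ≤ t - l) (by linarith : (0:ℝ) ≤ t + l - 2 * u)])
        (by field_simp <;> ring)
    rcases le_or_gt u l with hu3 | hu3
    · rw [hFun_mid2 hl hu2.le hu3]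
      exact reduce hl (N := -(l - u) ^ 2 + (u - t) ^ 2)
        (by nlinarith [mul_nonneg (by linarith : (0:ℝ) ≤ t - l) (by linarith : (0:ℝ) ≤ t + l - 2 * u)])
        (by field_simp <;> ring)
    · rw [hFun_ge hl hu3.le]
      exact reduce hl (N := (u - t) ^ 2) (sq_nonneg _) (by field_simp <;> ring)

lemma f0_eq (l L : ℝ) (hl : 0 < l) (hlL : l < L) (x : ℝ) :
    f0 l L x = hFun l (x + L) + hFun l (L - x) - 1 := by
  unfold f0; split_ifs with h1 h2 h3 h4
  · rw [hFun_le hl (show x + L ≤ -l by linarith), hFun_ge hl (show l ≤ L - x by linarith)]; ring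
  · rw [hFun_ge hl (show l ≤ L - x by linarith)]; ring
  · rw [hFun_ge hl (show l ≤ x + L by linarith), hFun_ge hl (show l ≤ L - x by linarith)]; norm_num
  · rw [hFun_ge hl (show l ≤ x + L by linarith)]; ring
  · rw [hFun_ge hl (show l ≤ x + L by linarith), hFun_le hl (show L - x ≤ -l by linarith)]; ring

lemma measurable_hFun (l : ℝ) : Measurable (hFun l) := by
  unfold hFun
  refine Measurable.ite (measurableSet_lt measurable_id measurable_const) measurable_const ?_
  refine Measurable.ite (measurableSet_le measurable_id measurable_const) (by fun_prop) ?_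
  exact Measurable.ite (measurableSet_le measurable_id measurable_const) (by fun_prop) measurable_const
lemma measurable_f0 (l L : ℝ) : Measurable (f0 l L) := by
  unfold f0
  refine Measurable.ite (measurableSet_lt measurable_id measurable_const) measurable_const ?_
  refine Measurable.ite (measurableSet_lt measurable_id measurable_const) ((measurable_hFun l).comp (by fun_prop)) ?_
  refine Measurable.ite (measurableSet_le measurable_id measurable_const) measurable_const ?_
  exact Measurable.ite (measurableSet_le measurable_id measurable_const) ((measurable_hFun l).comp (by fun_prop)) measurable_const


lemma integrable_sq_gauss {b : ℝ} (hb : 0 < b) :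
    Integrable fun y : ℝ => y ^ 2 * Real.exp (-b * y ^ 2) := by
  have h := integrable_rpow_mul_exp_neg_mul_sq hb (s := 2) (by norm_num)
  simpa [show ∀ x : ℝ, x ^ (2:ℝ) = x ^ 2 from fun x => by
    rw [show (2:ℝ) = ((2:ℕ):ℝ) by norm_num, Real.rpow_natCast]] using h

lemma gauss_moment1 {b : ℝ} (hb : 0 < b) :
    ∫ y : ℝ, y * Real.exp (-b * y ^ 2) = 0 := by
  have h := integral_neg_eq_self (fun y : ℝ => y * Real.exp (-b * y ^ 2)) volume
  simp only [neg_sq, neg_mul, integral_neg] at h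
  simp only [neg_mul]
  linarith

lemma gauss_moment2 {b : ℝ} (hb : 0 < b) :
    ∫ y : ℝ, y ^ 2 * Real.exp (-b * y ^ 2) = Real.sqrt (Real.pi / b) / (2 * b) := by
  have hint2 := integrable_sq_gauss hb
  have hder : ∀ y : ℝ, HasDerivAt (fun y : ℝ => y * Real.exp (-b * y ^ 2))
      (Real.exp (-b * y ^ 2) - 2 * b * (y ^ 2 * Real.exp (-b * y ^ 2))) y := by
    intro y
    have h1 : HasDerivAt (fun y : ℝ => -b * y ^ 2) (-b * (2 * y)) y := by
      simpa using (hasDerivAt_pow 2 y).const_mul (-b)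
    have h3 := (hasDerivAt_id y).mul h1.exp
    exact h3.congr_deriv (by simp only [id_eq]; ring)
  have hzero : ∫ y : ℝ, (Real.exp (-b * y ^ 2) - 2 * b * (y ^ 2 * Real.exp (-b * y ^ 2))) = 0 :=
    integral_eq_zero_of_hasDerivAt_of_integrable hder
      ((integrable_exp_neg_mul_sq hb).sub (hint2.const_mul (2 * b)))
      (integrable_mul_exp_neg_mul_sq hb)
  rw [integral_sub (integrable_exp_neg_mul_sq hb) (hint2.const_mul (2 * b)),
    integral_const_mul, integral_gaussian] at hzero
  have hb' : (2 * b) ≠ 0 := by positivity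
  rw [eq_div_iff hb']
  linear_combination -hzero


lemma f0_nonneg (l L : ℝ) (hl : 0 < l) (x : ℝ) : 0 ≤ f0 l L x := by
  unfold f0; split_ifs <;> first | exact hFun_nonneg hl | norm_num

lemma f0_le_one (l L : ℝ) (hl : 0 < l) (x : ℝ) : f0 l L x ≤ 1 := by
  unfold f0; split_ifs <;> first | exact hFun_le_one hl | norm_num

/-- The key semiconvexity bound for `f0`. -/
lemma f0key (l L : ℝ) (hl : 0 < l) (hlL : l < L) (x z : ℝ) :
    f0 l L x + (dFun l (x + L) - dFun l (L - x)) * (z - x) - (z - x) ^ 2 / l ^ 2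
      ≤ f0 l L z := by
  have hl' : l ≠ 0 := ne_of_gt hl
  have h1 := hkey l hl (x + L) (z + L)
  have h2 := hkey l hl (L - x) (L - z)
  rw [f0_eq l L hl hlL x, f0_eq l L hl hlL z]
  rw [show z + L - (x + L) = z - x by ring] at h1
  rw [show L - z - (L - x) = x - z by ring] at h2
  have hd : (z - x) ^ 2 / l ^ 2 = (z - x) ^ 2 / (2 * l ^ 2) + (x - z) ^ 2 / (2 * l ^ 2) := by
    rw [show (x - z) ^ 2 = (z - x) ^ 2 by ring]
    field_simp
    ring
  linarith [h1, h2]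

/-- `(e^{sΔ}f₀)(x) ≥ f₀(x) − 2s/l²` for all `s > 0` and `x ∈ ℝ`. -/
theorem stmt3 (l L : ℝ) (hl : 0 < l) (hlL : l < L) (s : ℝ) (hs : 0 < s) (x : ℝ) :
    f0 l L x - 2 * s / l ^ 2 ≤ heatSG s (f0 l L) x := by
  have hl' : l ≠ 0 := ne_of_gt hl
  have hs' : s ≠ 0 := ne_of_gt hs
  set b : ℝ := (4 * s)⁻¹ with hbdef
  have hb : 0 < b := by rw [hbdef]; positivity
  set p : ℝ := dFun l (x + L) - dFun l (L - x) with hpdef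
  set S : ℝ := Real.sqrt (Real.pi / b) with hSdef
  have hSpos : 0 < S := Real.sqrt_pos.mpr (by positivity)
  have hmf : Measurable (f0 l L) := measurable_f0 l L
  have hK : Integrable fun y : ℝ => Real.exp (-b * y ^ 2) := integrable_exp_neg_mul_sq hb
  have hK1 : Integrable fun y : ℝ => y * Real.exp (-b * y ^ 2) := integrable_mul_exp_neg_mul_sq hb
  have hK2 : Integrable fun y : ℝ => y ^ 2 * Real.exp (-b * y ^ 2) := integrable_sq_gauss hb
  have hg2 : Integrable fun y : ℝ => Real.exp (-b * y ^ 2) * f0 l L (x - y) := by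
    apply Integrable.mono' hK
    · exact hK.aestronglyMeasurable.mul
        ((hmf.comp (measurable_const.sub measurable_id)).aestronglyMeasurable)
    · filter_upwards with y
      rw [Real.norm_eq_abs, abs_mul, abs_of_nonneg (Real.exp_pos _).le,
        abs_of_nonneg (f0_nonneg l L hl _)]
      exact mul_le_of_le_one_right (Real.exp_pos _).le (f0_le_one l L hl _)
  have hg1 : Integrable fun y : ℝ =>
      f0 l L x * Real.exp (-b * y ^ 2) - p * (y * Real.exp (-b * y ^ 2))
        - 1 / l ^ 2 * (y ^ 2 * Real.exp (-b * y ^ 2)) :=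
    ((hK.const_mul _).sub (hK1.const_mul _)).sub (hK2.const_mul _)
  have hle : (fun y : ℝ =>
      f0 l L x * Real.exp (-b * y ^ 2) - p * (y * Real.exp (-b * y ^ 2))
        - 1 / l ^ 2 * (y ^ 2 * Real.exp (-b * y ^ 2)))
      ≤ fun y : ℝ => Real.exp (-b * y ^ 2) * f0 l L (x - y) := by
    intro y
    have hk := f0key l L hl hlL x (x - y)
    rw [show x - y - x = -y by ring] at hk
    rw [neg_sq] at hk
    have he : (0 : ℝ) < Real.exp (-b * y ^ 2) := Real.exp_pos _
    have h2 : f0 l L x - p * y - y ^ 2 / l ^ 2 ≤ f0 l L (x - y) := by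
      rw [hpdef]; linarith [hk]
    calc f0 l L x * Real.exp (-b * y ^ 2) - p * (y * Real.exp (-b * y ^ 2))
          - 1 / l ^ 2 * (y ^ 2 * Real.exp (-b * y ^ 2))
        = Real.exp (-b * y ^ 2) * (f0 l L x - p * y - y ^ 2 / l ^ 2) := by ring
      _ ≤ Real.exp (-b * y ^ 2) * f0 l L (x - y) := mul_le_mul_of_nonneg_left h2 he.le
  have hmono := integral_mono hg1 hg2 hle
  have hlow : ∫ y : ℝ, (f0 l L x * Real.exp (-b * y ^ 2) - p * (y * Real.exp (-b * y ^ 2))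
      - 1 / l ^ 2 * (y ^ 2 * Real.exp (-b * y ^ 2)))
      = f0 l L x * S - 1 / l ^ 2 * (S / (2 * b)) := by
    have hA : Integrable fun y : ℝ => f0 l L x * Real.exp (-b * y ^ 2) := hK.const_mul _
    have hB : Integrable fun y : ℝ => p * (y * Real.exp (-b * y ^ 2)) := hK1.const_mul _
    have hC : Integrable fun y : ℝ => 1 / l ^ 2 * (y ^ 2 * Real.exp (-b * y ^ 2)) :=
      hK2.const_mul _
    have hAB : Integrable fun y : ℝ =>
        f0 l L x * Real.exp (-b * y ^ 2) - p * (y * Real.exp (-b * y ^ 2)) := hA.sub hB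
    rw [integral_sub hAB hC, integral_sub hA hB, integral_const_mul, integral_const_mul,
      integral_const_mul, integral_gaussian, gauss_moment1 hb, gauss_moment2 hb, ← hSdef]
    ring
  rw [heatSG, if_neg (not_le.mpr hs)]
  have hintegrand : (fun y : ℝ => Real.exp (-(y ^ 2) / (4 * s)) * f0 l L (x - y))
      = fun y : ℝ => Real.exp (-b * y ^ 2) * f0 l L (x - y) := by
    funext y
    congr 1
    rw [hbdef]
    ring
  rw [hintegrand]
  have hCS : (4 * Real.pi * s) ^ (-(1 : ℝ) / 2) = S⁻¹ := by
    rw [show (-(1 : ℝ) / 2) = -(1 / 2) by norm_num, Real.rpow_neg (by positivity),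
      ← Real.sqrt_eq_rpow, hSdef]
    congr 1
    rw [hbdef]
    field_simp
  rw [hCS]
  have hfinal : f0 l L x - 2 * s / l ^ 2 = S⁻¹ * (f0 l L x * S - 1 / l ^ 2 * (S / (2 * b))) := by
    rw [hbdef]
    field_simp
    ring
  rw [hfinal]
  apply mul_le_mul_of_nonneg_left _ (by positivity)
  rw [← hlow]
  exact hmono
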